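/- Let H : ℝ → ℝ be continuous and coercive, and let A₁ and A₂ be two set limiters for H. If the associated limited flux functions coincide, F_{A₁} = F_{A₂} as functions on ℝ, then A₁ = A₂. -/
import Mathlib


open Set Filter Topology

/-- `p⁻ = sup {q < p : H(q) ≥ H(p)}`. -/
noncomputable def pminus (H : ℝ → ℝ) (p : ℝ) : ℝ :=
  sSup {q : ℝ | q < p ∧ H p ≤ H q}

/-- `p⁺ = inf {q > p : H(q) ≤ H(p)}`, with `inf ∅ = +∞` (extended reals). -/
noncomputable def pplus (H : ℝ → ℝ) (p : ℝ) : EReal :=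
  sInf (Real.toEReal '' {q : ℝ | p < q ∧ H q ≤ H p})

/-- `H(p) → +∞` as `|p| → +∞`. -/
def Coercive (H : ℝ → ℝ) : Prop :=
  Tendsto H atTop atTop ∧ Tendsto H atBot atTop

/-- `F(p) → +∞` as `p → -∞`. -/
def SemiCoercive (F : ℝ → ℝ) : Prop := Tendsto F atBot atTop

/-- the open interval `(a⁻, a⁺)` (upper endpoint possibly `+∞`). -/
def ooMM (H : ℝ → ℝ) (a : ℝ) : Set ℝ :=
  {r : ℝ | pminus H a < r ∧ (r : EReal) < pplus H a}

/-- the open interval `(p, p⁺)` (upper endpoint possibly `+∞`). -/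
def ooUp (H : ℝ → ℝ) (p : ℝ) : Set ℝ :=
  {r : ℝ | p < r ∧ (r : EReal) < pplus H p}

/-- the closed interval `[a⁻, a⁺]` (upper endpoint possibly `+∞`). -/
def ccMM (H : ℝ → ℝ) (a : ℝ) : Set ℝ :=
  {r : ℝ | pminus H a ≤ r ∧ (r : EReal) ≤ pplus H a}

/-- `A` is a set limiter for `H`. -/
def IsSetLimiter (H : ℝ → ℝ) (A : Set ℝ) : Prop :=
  (∀ a ∈ A, (pminus H a : EReal) ≠ pplus H a) ∧
  (∀ a ∈ A, ∀ b ∈ A, a < b → H b ≤ H a) ∧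
  (∀ p : ℝ, pminus H p < p → ∃ a ∈ A, (Ioo (pminus H p) p ∩ ooMM H a).Nonempty) ∧
  (∀ p : ℝ, (p : EReal) < pplus H p → ∃ a ∈ A, (ooUp H p ∩ ooMM H a).Nonempty)

open Classical in
/-- The `A`-limited flux function `F_A`: equal to `H(a)` on `[a⁻, a⁺]` for `a ∈ A`,
and to `H` elsewhere. -/
noncomputable def limFlux (H : ℝ → ℝ) (A : Set ℝ) (p : ℝ) : ℝ :=
  if h : ∃ a, a ∈ A ∧ p ∈ ccMM H a then H h.choose else H p

/-- Condition (S) in the definition of `A_F`. -/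
def CondS (H F : ℝ → ℝ) (p : ℝ) : Prop :=
  pminus H p ≠ p ∧ H p ≤ F p ∧
    ∀ q : ℝ, H q ≤ F q → (ooMM H q ∩ Ioo (pminus H p) p).Nonempty → H q ≤ H p

/-- Condition (T) in the definition of `A_F`. -/
def CondT (H F : ℝ → ℝ) (p : ℝ) : Prop :=
  (p : EReal) ≠ pplus H p ∧ F p ≤ H p ∧
    ∀ q : ℝ, F q ≤ H q → (ooMM H q ∩ ooUp H p).Nonempty → H p ≤ H q

/-- The set `A_F` associated with a boundary function `F`. -/
def limiterOf (H F : ℝ → ℝ) : Set ℝ := {p : ℝ | CondS H F p ∨ CondT H F p}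

section Aux

variable {H : ℝ → ℝ}

lemma le_pminus' {p q : ℝ} (h1 : q < p) (h2 : H p ≤ H q) : q ≤ pminus H p :=
  le_csSup ⟨p, fun _ hx => hx.1.le⟩ ⟨h1, h2⟩

lemma pminus_le' (hc : Tendsto H atBot atTop) (p : ℝ) : pminus H p ≤ p := by
  obtain ⟨q, hq1, hq2⟩ : ∃ q, H p ≤ H q ∧ q < p :=
    ((hc.eventually_ge_atTop (H p)).and (eventually_lt_atBot p)).exists
  exact csSup_le ⟨q, hq2, hq1⟩ fun x hx => hx.1.le

lemma pplus_le' {p q : ℝ} (h1 : p < q) (h2 : H q ≤ H p) : pplus H p ≤ (q : EReal) :=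
  sInf_le ⟨q, ⟨h1, h2⟩, rfl⟩

lemma le_pplus' (p : ℝ) : (p : EReal) ≤ pplus H p :=
  le_sInf (by rintro x ⟨q, ⟨h1, _⟩, rfl⟩; exact_mod_cast h1.le)

lemma H_lt_left {p q : ℝ} (h1 : pminus H p < q) (h2 : q < p) : H q < H p := by
  by_contra h
  exact absurd (le_pminus' h2 (not_lt.1 h)) (not_le.2 h1)

lemma H_lt_right {p q : ℝ} (h1 : p < q) (h2 : (q : EReal) < pplus H p) : H p < H q := by
  by_contra h
  exact absurd (pplus_le' h1 (not_lt.1 h)) (not_le.2 h2)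

lemma C1' (hH : Continuous H) {b x : ℝ} (hbx : b < x) (hx : pplus H b = (x : EReal))
    (hlt : H x < H b) : False := by
  obtain ⟨l, u, hmem, hsub⟩ := mem_nhds_iff_exists_Ioo_subset.mp
    ((isOpen_lt hH continuous_const).mem_nhds (show H x < H b from hlt))
  obtain ⟨q, hq1, hq2⟩ := exists_between (max_lt hbx hmem.1)
  have hqs : H q < H b := hsub ⟨lt_of_le_of_lt (le_max_right b l) hq1, hq2.trans hmem.2⟩
  have h1 : pplus H b ≤ (q : EReal) :=
    pplus_le' (lt_of_le_of_lt (le_max_left b l) hq1) hqs.le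
  rw [hx] at h1
  exact absurd hq2 (not_lt.2 (by exact_mod_cast h1))

lemma C2' (hH : Continuous H) {b x : ℝ} (hxb : x < b) (hx : pminus H b = x)
    (hlt : H b < H x) : False := by
  obtain ⟨l, u, hmem, hsub⟩ := mem_nhds_iff_exists_Ioo_subset.mp
    ((isOpen_lt continuous_const hH).mem_nhds (show H b < H x from hlt))
  obtain ⟨q, hq1, hq2⟩ := exists_between (lt_min hxb hmem.2)
  have hqs : H b < H q := hsub ⟨hmem.1.trans hq1, lt_of_lt_of_le hq2 (min_le_right b u)⟩
  have h1 : q ≤ pminus H b := le_pminus' (lt_of_lt_of_le hq2 (min_le_left b u)) hqs.le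
  rw [hx] at h1
  exact absurd hq1 (not_lt.2 h1)

/-- If `x ∈ (a⁻, a⁺) ∩ [b⁻, b⁺]` for `a, b` in a set limiter, then `H b = H a`. -/
lemma overlap (hH : Continuous H) {A : Set ℝ} (hA : IsSetLimiter H A) {a b x : ℝ}
    (ha : a ∈ A) (hb : b ∈ A) (hxa : x ∈ ooMM H a) (hxb : x ∈ ccMM H b) : H b = H a := by
  obtain ⟨hxa1, hxa2⟩ := hxa
  obtain ⟨hxb1, hxb2⟩ := hxb
  rcases lt_trichotomy b a with h | h | h
  · -- b < a
    have hba : H a ≤ H b := hA.2.1 b hb a ha h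
    refine le_antisymm ?_ hba
    by_contra hgt
    push_neg at hgt
    have hb2 : pplus H b ≤ (a : EReal) := by
      by_contra h'
      push_neg at h'
      exact absurd (H_lt_right h h') (not_lt.2 hgt.le)
    have hxle : x ≤ a := by exact_mod_cast hxb2.trans hb2
    rcases eq_or_lt_of_le hxle with hxe | hxl
    · -- x = a, so b⁺ = a
      have hb3 : pplus H b = (a : EReal) :=
        le_antisymm hb2 (by rw [← hxe]; exact hxb2)
      obtain ⟨q, hq1, hq2⟩ := exists_between (max_lt (hxe ▸ hxa1) h)
      have h4 : H q < H a := H_lt_left (lt_of_le_of_lt (le_max_left _ _) hq1) hq2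
      have h5 : H b < H q := H_lt_right (lt_of_le_of_lt (le_max_right _ _) hq1)
        (by rw [hb3]; exact_mod_cast hq2)
      exact absurd (h5.trans (h4.trans hgt)) (lt_irrefl _)
    · -- x < a
      have hxH : H x < H a := H_lt_left hxa1 hxl
      have hbx : b < x := lt_of_le_of_lt (le_pminus' h hgt.le) hxa1
      rcases lt_or_eq_of_le hxb2 with h2 | h2
      · exact absurd ((H_lt_right hbx h2).trans (hxH.trans hgt)) (lt_irrefl _)
      · exact absurd (C1' hH hbx h2.symm (hxH.trans hgt)) (fun hf => hf)
  · rw [h]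
  · -- a < b
    have hab : H b ≤ H a := hA.2.1 a ha b hb h
    refine le_antisymm hab ?_
    by_contra hgt
    push_neg at hgt
    have hb3 : a ≤ pminus H b := le_pminus' h hgt.le
    have hax : a ≤ x := hb3.trans hxb1
    rcases eq_or_lt_of_le hax with hxe | hxl
    · -- a = x, so b⁻ = a
      have hb4 : pminus H b = a := le_antisymm (hxe ▸ hxb1) hb3
      rcases lt_or_ge (b : EReal) (pplus H a) with h' | h'
      · exact absurd (H_lt_right h h') (not_lt.2 hgt.le)
      · obtain ⟨q', hq1', hq2'⟩ := EReal.exists_between_coe_real (hxe ▸ hxa2 :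
          (a : EReal) < pplus H a)
        have haq' : a < q' := by exact_mod_cast hq1'
        have haq'' : a < min q' ((a + b) / 2) := lt_min haq' (by linarith)
        have hqb : min q' ((a + b) / 2) < b :=
          lt_of_le_of_lt (min_le_right _ _) (by linarith)
        have h4 : H a < H (min q' ((a + b) / 2)) := H_lt_right haq''
          (lt_of_le_of_lt (by exact_mod_cast min_le_left q' ((a + b) / 2)) hq2')
        have h5 : H (min q' ((a + b) / 2)) < H b :=
          H_lt_left (hb4 ▸ haq'') hqb
        exact absurd (hgt.trans (h4.trans h5)) (lt_irrefl _)
    · -- a < x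
      have hxH : H a < H x := H_lt_right hxl hxa2
      rcases lt_or_ge x b with hxb' | hbx'
      · rcases lt_or_eq_of_le hxb1 with h2 | h2
        · exact absurd ((H_lt_left h2 hxb').trans (hgt.trans hxH)) (lt_irrefl _)
        · exact absurd (C2' hH hxb' h2 (hgt.trans hxH)) (fun hf => hf)
      · have : (b : EReal) < pplus H a :=
          lt_of_le_of_lt (by exact_mod_cast hbx') hxa2
        exact absurd (H_lt_right h this) (not_lt.2 hgt.le)

lemma limFlux_eq_of_mem (hH : Continuous H) {A : Set ℝ} (hA : IsSetLimiter H A)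
    {a x : ℝ} (ha : a ∈ A) (hx : x ∈ ooMM H a) : limFlux H A x = H a := by
  have hex : ∃ c, c ∈ A ∧ x ∈ ccMM H c := ⟨a, ha, hx.1.le, hx.2.le⟩
  rw [limFlux, dif_pos hex]
  exact overlap hH hA ha hex.choose_spec.1 hx hex.choose_spec.2

lemma limFlux_ne_exists {A : Set ℝ} {x : ℝ} (hx : limFlux H A x ≠ H x) :
    ∃ c, c ∈ A ∧ x ∈ ccMM H c ∧ limFlux H A x = H c := by
  by_cases h : ∃ a, a ∈ A ∧ x ∈ ccMM H a
  · exact ⟨h.choose, h.choose_spec.1, h.choose_spec.2, by rw [limFlux, dif_pos h]⟩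
  · exact absurd (by rw [limFlux, dif_neg h]) hx

lemma limiter_subset (hH : Continuous H) (hcoer : Coercive H)
    {A₁ A₂ : Set ℝ} (hA₁ : IsSetLimiter H A₁) (hA₂ : IsSetLimiter H A₂)
    (heq : limFlux H A₁ = limFlux H A₂) : A₁ ⊆ A₂ := by
  intro a ha
  have h1 := hA₁.1 a ha
  have hle1 : pminus H a ≤ a := pminus_le' hcoer.2 a
  have hle2 : (a : EReal) ≤ pplus H a := le_pplus' a
  rcases lt_or_eq_of_le hle1 with hlt | heqm
  · -- a⁻ < a : work on the left of a
    obtain ⟨x, hx1, hx2⟩ := exists_between hlt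
    have hxo : x ∈ ooMM H a :=
      ⟨hx1, lt_of_lt_of_le (by exact_mod_cast hx2) hle2⟩
    have hFx : limFlux H A₁ x = H a := limFlux_eq_of_mem hH hA₁ ha hxo
    have hxH : H x < H a := H_lt_left hx1 hx2
    have hne : limFlux H A₂ x ≠ H x := by
      rw [← heq, hFx]; exact hxH.ne'
    obtain ⟨b, hb, hxb, hFb⟩ := limFlux_ne_exists hne
    have hba : H b = H a := by rw [← hFb, ← heq, hFx]
    rcases lt_trichotomy b a with h | h | h
    · -- b < a
      rcases lt_or_ge b x with hbx | hxb'
      · rcases lt_or_eq_of_le hxb.2 with h2 | h2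
        · exact absurd (H_lt_right hbx h2) (not_lt.2 (hba ▸ hxH.le))
        · exact absurd (C1' hH hbx h2.symm (hba ▸ hxH)) (fun hf => hf)
      · exact absurd (H_lt_left (lt_of_lt_of_le hx1 hxb') h) (not_lt.2 hba.ge)
    · exact h ▸ hb
    · -- a < b
      exact absurd (H_lt_left (lt_of_le_of_lt hxb.1 hx2) h) (not_lt.2 hba.le)
  · -- a⁻ = a, hence a < a⁺ : work on the right of a
    have h2 : (a : EReal) < pplus H a := lt_of_le_of_ne hle2 (by rw [heqm] at h1; exact h1)
    obtain ⟨x, hx1, hx2⟩ := EReal.exists_between_coe_real h2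
    have hax : a < x := by exact_mod_cast hx1
    have hxo : x ∈ ooMM H a := ⟨lt_of_le_of_lt hle1 hax, hx2⟩
    have hFx : limFlux H A₁ x = H a := limFlux_eq_of_mem hH hA₁ ha hxo
    have hxH : H a < H x := H_lt_right hax hx2
    have hne : limFlux H A₂ x ≠ H x := by
      rw [← heq, hFx]; exact hxH.ne
    obtain ⟨b, hb, hxb, hFb⟩ := limFlux_ne_exists hne
    have hba : H b = H a := by rw [← hFb, ← heq, hFx]
    rcases lt_trichotomy b a with h | h | h
    · -- b < a
      have : (a : EReal) < pplus H b :=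
        lt_of_lt_of_le (by exact_mod_cast hax) hxb.2
      exact absurd (H_lt_right h this) (not_lt.2 hba.ge)
    · exact h ▸ hb
    · -- a < b
      rcases lt_or_ge x b with hxb' | hbx'
      · rcases lt_or_eq_of_le hxb.1 with h3 | h3
        · exact absurd (H_lt_left h3 hxb') (not_lt.2 (hba ▸ hxH.le))
        · exact absurd (C2' hH hxb' h3 (hba ▸ hxH)) (fun hf => hf)
      · have : (b : EReal) < pplus H a :=
          lt_of_le_of_lt (by exact_mod_cast hbx') hx2
        exact absurd (H_lt_right h this) (not_lt.2 hba.le)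

end Aux

theorem stmt8 (H : ℝ → ℝ) (hH : Continuous H) (hcoer : Coercive H)
    (A₁ A₂ : Set ℝ) (hA₁ : IsSetLimiter H A₁) (hA₂ : IsSetLimiter H A₂)
    (heq : limFlux H A₁ = limFlux H A₂) :
    A₁ = A₂ :=
  Set.Subset.antisymm (limiter_subset hH hcoer hA₁ hA₂ heq)
    (limiter_subset hH hcoer hA₂ hA₁ heq.symm)
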